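/- Let r ≥ 1 and let z = (z₀, z₁, z₂, z₃) ∈ Mat(2r × 4r, ℂ) be written in blocks zᵢ ∈ Mat(2r × r, ℂ), and assume det(z₀ | z₁) ≠ 0. Then there exist g ∈ GL(2r, ℂ), h ∈ H_{(4)}, and x ∈ Mat(r×r, ℂ) such that g · z · h is the 2r×4r matrix with block rows (1_r, 0, 0, 0) and (0, 1_r, 0, x). -/

import Mathlib

open Matrix

/-- The `2r × nr` matrix assembled from `n` block columns of size `2r × r`. -/
def ofBlockCols (r n : ℕ) (z : Fin n → Matrix (Fin r ⊕ Fin r) (Fin r) ℂ) :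
    Matrix (Fin r ⊕ Fin r) (Fin n × Fin r) ℂ :=
  Matrix.of fun i jk => z jk.1 i jk.2

/-- The `nr × nr` matrix assembled from an `n × n` array of `r × r` blocks. -/
def ofBlockMat (r n : ℕ) (H : Fin n → Fin n → Matrix (Fin r) (Fin r) ℂ) :
    Matrix (Fin n × Fin r) (Fin n × Fin r) ℂ :=
  Matrix.of fun jk lk => H jk.1 lk.1 jk.2 lk.2

lemma mul_ofBlockCols (r n : ℕ) (g : Matrix (Fin r ⊕ Fin r) (Fin r ⊕ Fin r) ℂ)
    (z : Fin n → Matrix (Fin r ⊕ Fin r) (Fin r) ℂ) :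
    g * ofBlockCols r n z = ofBlockCols r n (fun j => g * z j) := by
  ext i ⟨j, k⟩
  simp [ofBlockCols, Matrix.mul_apply]

lemma ofBlockCols_mul_ofBlockMat (r n : ℕ) (z : Fin n → Matrix (Fin r ⊕ Fin r) (Fin r) ℂ)
    (H : Fin n → Fin n → Matrix (Fin r) (Fin r) ℂ) :
    ofBlockCols r n z * ofBlockMat r n H =
      ofBlockCols r n (fun l => ∑ j, z j * H j l) := by
  ext i ⟨l, k⟩
  simp [ofBlockCols, ofBlockMat, Matrix.mul_apply, Matrix.sum_apply, Fintype.sum_prod_type]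

lemma fromRows_add {m₁ m₂ n : Type*} (A C : Matrix m₁ n ℂ) (B D : Matrix m₂ n ℂ) :
    fromRows A B + fromRows C D = fromRows (A + C) (B + D) := by
  ext (_ | _) _ <;> rfl

set_option maxHeartbeats 1000000 in
/-- Normal form lemma for `(m, N) = (2r, 4r)`, partition `λ = (4)`:
`z = (z₀, z₁, z₂, z₃)` with `det(z₀ | z₁) ≠ 0` can be brought, by the action of
`GL(2r, ℂ) × H_{(4)}` (the generalized Jordan group `J_r(4)`), to the normal form
with block rows `(1_r, 0, 0, 0)` and `(0, 1_r, 0, x)`. -/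
theorem normal_form_partition_4 (r : ℕ) (hr : 1 ≤ r)
    (z : Fin 4 → Matrix (Fin r ⊕ Fin r) (Fin r) ℂ)
    (h01 : (fromCols (z 0) (z 1)).det ≠ 0) :
    ∃ (g : GL (Fin r ⊕ Fin r) ℂ) (h₀ : GL (Fin r) ℂ)
      (h₁ h₂ h₃ : Matrix (Fin r) (Fin r) ℂ) (x : Matrix (Fin r) (Fin r) ℂ),
      (g : Matrix (Fin r ⊕ Fin r) (Fin r ⊕ Fin r) ℂ) * ofBlockCols r 4 z *
          ofBlockMat r 4
            ![![(h₀ : Matrix (Fin r) (Fin r) ℂ), h₁, h₂, h₃],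
              ![0, (h₀ : Matrix (Fin r) (Fin r) ℂ), h₁, h₂],
              ![0, 0, (h₀ : Matrix (Fin r) (Fin r) ℂ), h₁],
              ![0, 0, 0, (h₀ : Matrix (Fin r) (Fin r) ℂ)]] =
        ofBlockCols r 4
          ![fromRows 1 0, fromRows 0 1, 0, fromRows 0 x] := by
  set A : Matrix (Fin r ⊕ Fin r) (Fin r ⊕ Fin r) ℂ := fromCols (z 0) (z 1) with hA
  have hAu : IsUnit A.det := isUnit_iff_ne_zero.mpr h01
  set a : Matrix (Fin r) (Fin r) ℂ := (A⁻¹ * z 2).toRows₁ with ha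
  set b : Matrix (Fin r) (Fin r) ℂ := (A⁻¹ * z 2).toRows₂ with hb
  set c : Matrix (Fin r) (Fin r) ℂ := (A⁻¹ * z 3).toRows₁ with hc
  set d : Matrix (Fin r) (Fin r) ℂ := (A⁻¹ * z 3).toRows₂ with hd
  set U : Matrix (Fin r ⊕ Fin r) (Fin r ⊕ Fin r) ℂ := fromBlocks 1 b 0 1 with hU
  set G : Matrix (Fin r ⊕ Fin r) (Fin r ⊕ Fin r) ℂ := U * A⁻¹ with hG
  have hUdet : U.det = 1 := by
    rw [hU, Matrix.det_fromBlocks_zero₂₁]; simp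
  have hGu : IsUnit G.det := by
    rw [hG, Matrix.det_mul, hUdet, one_mul]
    exact A.isUnit_nonsing_inv_det hAu
  have w0 : A⁻¹ * z 0 = fromRows 1 0 := by
    have h : A * (fromRows 1 0 : Matrix (Fin r ⊕ Fin r) (Fin r) ℂ) = z 0 := by
      rw [hA, fromCols_mul_fromRows]; simp
    rw [← h, ← Matrix.mul_assoc, Matrix.nonsing_inv_mul A hAu, Matrix.one_mul]
  have w1 : A⁻¹ * z 1 = fromRows 0 1 := by
    have h : A * (fromRows 0 1 : Matrix (Fin r ⊕ Fin r) (Fin r) ℂ) = z 1 := by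
      rw [hA, fromCols_mul_fromRows]; simp
    rw [← h, ← Matrix.mul_assoc, Matrix.nonsing_inv_mul A hAu, Matrix.one_mul]
  have g0 : G * z 0 = fromRows 1 0 := by
    rw [hG, Matrix.mul_assoc, w0, hU, fromBlocks_mul_fromRows]; simp
  have g1 : G * z 1 = fromRows b 1 := by
    rw [hG, Matrix.mul_assoc, w1, hU, fromBlocks_mul_fromRows]; simp
  have g2 : G * z 2 = fromRows (a + b * b) b := by
    rw [hG, Matrix.mul_assoc, ← fromRows_toRows (A⁻¹ * z 2), ← ha, ← hb, hU,
      fromBlocks_mul_fromRows]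
    simp
  have g3 : G * z 3 = fromRows (c + b * d) d := by
    rw [hG, Matrix.mul_assoc, ← fromRows_toRows (A⁻¹ * z 3), ← hc, ← hd, hU,
      fromBlocks_mul_fromRows]
    simp
  refine ⟨Matrix.nonsingInvUnit G hGu, 1, -b, -a, b * a + a * b + b * b * b - c - b * d, d - a - b * b, ?_⟩
  rw [show ((Matrix.nonsingInvUnit G hGu : GL (Fin r ⊕ Fin r) ℂ) : Matrix (Fin r ⊕ Fin r) (Fin r ⊕ Fin r) ℂ) = G from rfl, mul_ofBlockCols, ofBlockCols_mul_ofBlockMat]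
  clear hA ha hb hc hd hU hG hUdet w0 w1 h01 hAu
  clear_value a b c d U G
  clear U A
  refine congrArg (ofBlockCols r 4) ?_
  funext l
  fin_cases l
  · rw [show ((⟨0, by norm_num⟩ : Fin 4) : Fin 4) = 0 from rfl]
    simp only [Fin.sum_univ_four, g0, g1, g2, g3, Matrix.cons_val_zero, Matrix.cons_val_one,
      Matrix.head_cons, Matrix.cons_val_two, Matrix.cons_val_three, Matrix.tail_cons,
      Units.val_one, Matrix.mul_one, Matrix.mul_zero, zero_add, add_zero, fromRows_mul,
      fromRows_add, Matrix.one_mul, Matrix.zero_mul]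
  · rw [show ((⟨1, by norm_num⟩ : Fin 4) : Fin 4) = 1 from rfl]
    simp only [Fin.sum_univ_four, g0, g1, g2, g3, Matrix.cons_val_zero, Matrix.cons_val_one,
      Matrix.head_cons, Matrix.cons_val_two, Matrix.cons_val_three, Matrix.tail_cons,
      Units.val_one, Matrix.mul_one, Matrix.mul_zero, zero_add, add_zero, fromRows_mul,
      fromRows_add, Matrix.one_mul, Matrix.zero_mul]
    rw [neg_add_cancel]
  · rw [show ((⟨2, by norm_num⟩ : Fin 4) : Fin 4) = 2 from rfl]
    simp only [Fin.sum_univ_four, g0, g1, g2, g3, Matrix.cons_val_zero, Matrix.cons_val_one,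
      Matrix.head_cons, Matrix.cons_val_two, Matrix.cons_val_three, Matrix.tail_cons,
      Units.val_one, Matrix.mul_one, Matrix.mul_zero, zero_add, add_zero, fromRows_mul,
      fromRows_add, Matrix.one_mul, Matrix.zero_mul]
    rw [← fromRows_zero]
    congr 1
    · noncomm_ring
    · exact neg_add_cancel b
  · rw [show ((⟨3, by norm_num⟩ : Fin 4) : Fin 4) = 3 from rfl]
    simp only [Fin.sum_univ_four, g0, g1, g2, g3, Matrix.cons_val_zero, Matrix.cons_val_one,
      Matrix.head_cons, Matrix.cons_val_two, Matrix.cons_val_three, Matrix.tail_cons,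
      Units.val_one, Matrix.mul_one, Matrix.mul_zero, zero_add, add_zero, fromRows_mul,
      fromRows_add, Matrix.one_mul, Matrix.zero_mul]
    congr 1 <;> noncomm_ring
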